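/- L1 proportionality of log-linear interpolation: let p, q ∈ Δ(A) with all coordinates ≥ ν > 0, let β ∈ (0,1), and let r ∈ Δ(A) be the normalized log-linear interpolation r(a) ∝ p(a)^{1−β} q(a)^{β}. Then ‖p − q‖_1 ≤ (4/(νβ)) ‖p − r‖_1. -/
import Mathlib


open Finset

/-- Lipschitz bound for log on [ν, ∞). -/
lemma log_lip_aux {ν x y : ℝ} (hν : 0 < ν) (hx : ν ≤ x) (hy : ν ≤ y) :
    ν * |Real.log x - Real.log y| ≤ |x - y| := by
  have hx0 : 0 < x := hν.trans_le hx
  have hy0 : 0 < y := hν.trans_le hy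
  wlog h : y ≤ x generalizing x y
  · rw [abs_sub_comm, abs_sub_comm x y]
    exact this hy hx hy0 hx0 (le_of_not_ge h)
  have hlog : Real.log y ≤ Real.log x := Real.log_le_log hy0 h
  rw [abs_of_nonneg (sub_nonneg.2 hlog), abs_of_nonneg (sub_nonneg.2 h)]
  have h1 : Real.log x - Real.log y = Real.log (x / y) :=
    (Real.log_div hx0.ne' hy0.ne').symm
  have h2 : Real.log (x / y) ≤ x / y - 1 := Real.log_le_sub_one_of_pos (by positivity)
  have h3 : Real.log x - Real.log y ≤ (x - y) / y := by
    rw [h1]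
    have : x / y - 1 = (x - y) / y := by field_simp
    linarith [h2, this.symm.le, this.le]
  have h4 : ν * ((x - y) / y) ≤ x - y := by
    rw [← mul_div_assoc, div_le_iff₀ hy0]
    nlinarith [sub_nonneg.2 h, hy]
  calc ν * (Real.log x - Real.log y) ≤ ν * ((x - y) / y) :=
        mul_le_mul_of_nonneg_left h3 hν.le
    _ ≤ x - y := h4

/-- softmax-type bound: L1 distance of two probability vectors is at most twice
the maximum logit difference. -/
lemma l1_le_two_sup {A : Type*} [Fintype A] [Nonempty A] (p q : A → ℝ)
    (hp : ∀ a, 0 < p a) (hq : ∀ a, 0 < q a)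
    (hpsum : ∑ a, p a = 1) (hqsum : ∑ a, q a = 1) :
    ∑ a, |p a - q a| ≤ 2 * Finset.univ.sup' Finset.univ_nonempty
      (fun a => Real.log (p a) - Real.log (q a)) := by
  set f : A → ℝ := fun a => Real.log (p a) - Real.log (q a) with hf
  set M := Finset.univ.sup' Finset.univ_nonempty f with hMdef
  have hMle : ∀ a, f a ≤ M := fun a => Finset.le_sup' f (Finset.mem_univ a)
  have hM0 : 0 ≤ M := by
    obtain ⟨a, -, ha⟩ := Finset.exists_le_of_sum_le (f := q) (g := p)
      Finset.univ_nonempty (le_of_eq (hqsum.trans hpsum.symm))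
    refine le_trans ?_ (hMle a)
    show (0:ℝ) ≤ Real.log (p a) - Real.log (q a)
    have := Real.log_le_log (hq a) ha
    linarith
  have key : ∀ a, p a - q a ≤ p a * f a := by
    intro a
    have h := Real.log_le_sub_one_of_pos (div_pos (hq a) (hp a))
    rw [Real.log_div (hq a).ne' (hp a).ne'] at h
    have h2 := mul_le_mul_of_nonneg_left h (hp a).le
    have hqp : p a * (q a / p a - 1) = q a - p a := by
      have hne := (hp a).ne'
      field_simp
    show p a - q a ≤ p a * (Real.log (p a) - Real.log (q a))
    nlinarith [h2]
  set S := Finset.univ.filter (fun a => q a ≤ p a) with hS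
  have hsplit : ∑ a, |p a - q a| = 2 * ∑ a ∈ S, (p a - q a) := by
    have h1 : ∑ a ∈ S, (p a - q a) + ∑ a ∈ Finset.univ.filter (fun a => ¬ q a ≤ p a),
        (p a - q a) = 0 := by
      rw [Finset.sum_filter_add_sum_filter_not]
      rw [Finset.sum_sub_distrib, hpsum, hqsum]
      ring
    have h2 : ∑ a, |p a - q a| = ∑ a ∈ S, (p a - q a)
        + ∑ a ∈ Finset.univ.filter (fun a => ¬ q a ≤ p a), (q a - p a) := by
      rw [← Finset.sum_filter_add_sum_filter_not Finset.univ (fun a => q a ≤ p a)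
        (fun a => |p a - q a|)]
      congr 1
      · apply Finset.sum_congr rfl
        intro a ha
        have := (Finset.mem_filter.1 ha).2
        rw [abs_of_nonneg (by linarith)]
      · apply Finset.sum_congr rfl
        intro a ha
        have := (Finset.mem_filter.1 ha).2
        rw [abs_of_nonpos (by push_neg at this; linarith), neg_sub]
    have h3 : ∑ a ∈ Finset.univ.filter (fun a => ¬ q a ≤ p a), (q a - p a)
        = - ∑ a ∈ Finset.univ.filter (fun a => ¬ q a ≤ p a), (p a - q a) := by
      rw [Finset.sum_sub_distrib, Finset.sum_sub_distrib]
      ring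
    linarith [h1, h2, h3]
  have hbound : ∑ a ∈ S, (p a - q a) ≤ M := by
    calc ∑ a ∈ S, (p a - q a) ≤ ∑ a ∈ S, p a * f a :=
          Finset.sum_le_sum (fun a _ => key a)
      _ ≤ ∑ a ∈ S, p a * M := Finset.sum_le_sum
          (fun a _ => mul_le_mul_of_nonneg_left (hMle a) (hp a).le)
      _ ≤ ∑ a, p a * M := Finset.sum_le_sum_of_subset_of_nonneg
          (Finset.filter_subset _ _)
          (fun a _ _ => mul_nonneg (hp a).le hM0)
      _ = M := by rw [← Finset.sum_mul, hpsum, one_mul]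
  linarith [hsplit, hbound]

/-- L1 proportionality of the log-linear interpolation: for p, q ∈ Δ(A)
with coordinates ≥ ν > 0, β ∈ (0,1), and r ∝ p^{1−β} q^{β} the normalized log-linear
interpolation, ‖p − q‖₁ ≤ (4/(νβ)) ‖p − r‖₁. -/
theorem log_linear_interpolation_l1_proportionality {A : Type*} [Fintype A] [Nonempty A]
    (ν β : ℝ) (hν : 0 < ν) (hβ : β ∈ Set.Ioo (0 : ℝ) 1)
    (p q r : A → ℝ)
    (hp : ∀ a, ν ≤ p a) (hq : ∀ a, ν ≤ q a)
    (hpsum : ∑ a, p a = 1) (hqsum : ∑ a, q a = 1)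
    (hr : ∀ a, r a = p a ^ (1 - β) * q a ^ β / ∑ b, p b ^ (1 - β) * q b ^ β) :
    ∑ a, |p a - q a| ≤ (4 / (ν * β)) * ∑ a, |p a - r a| := by
  obtain ⟨hβ0, hβ1⟩ := hβ
  have hp0 : ∀ a, 0 < p a := fun a => hν.trans_le (hp a)
  have hq0 : ∀ a, 0 < q a := fun a => hν.trans_le (hq a)
  set Z := ∑ b, p b ^ (1 - β) * q b ^ β with hZ
  have hw0 : ∀ a, 0 < p a ^ (1 - β) * q a ^ β := fun a =>
    mul_pos (Real.rpow_pos_of_pos (hp0 a) _) (Real.rpow_pos_of_pos (hq0 a) _)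
  have hZ0 : 0 < Z := Finset.sum_pos (fun a _ => hw0 a) Finset.univ_nonempty
  have hZ1 : Z ≤ 1 := by
    have hterm : ∀ a, p a ^ (1 - β) * q a ^ β ≤ (1 - β) * p a + β * q a := fun a =>
      Real.geom_mean_le_arith_mean2_weighted (by linarith) hβ0.le (hp0 a).le (hq0 a).le
        (by ring)
    calc Z ≤ ∑ a, ((1 - β) * p a + β * q a) := Finset.sum_le_sum (fun a _ => hterm a)
      _ = 1 := by
        rw [Finset.sum_add_distrib, ← Finset.mul_sum, ← Finset.mul_sum, hpsum, hqsum]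
        ring
  have hνw : ∀ a, ν ≤ p a ^ (1 - β) * q a ^ β := by
    intro a
    have hbase : ν ^ (1 - β) * ν ^ β = ν := by
      rw [← Real.rpow_add hν]
      norm_num
    calc ν = ν ^ (1 - β) * ν ^ β := hbase.symm
      _ ≤ p a ^ (1 - β) * q a ^ β :=
        mul_le_mul (Real.rpow_le_rpow hν.le (hp a) (by linarith))
          (Real.rpow_le_rpow hν.le (hq a) hβ0.le)
          (Real.rpow_nonneg hν.le _) (Real.rpow_nonneg (hp0 a).le _)
  have hνr : ∀ a, ν ≤ r a := by
    intro a
    rw [hr a, le_div_iff₀ hZ0]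
    nlinarith [hνw a, hZ1, hν]
  have hg : ∀ a, Real.log (p a) - Real.log (r a)
      = β * (Real.log (p a) - Real.log (q a)) + Real.log Z := by
    intro a
    rw [hr a, Real.log_div (hw0 a).ne' hZ0.ne',
      Real.log_mul (Real.rpow_pos_of_pos (hp0 a) _).ne' (Real.rpow_pos_of_pos (hq0 a) _).ne',
      Real.log_rpow (hp0 a), Real.log_rpow (hq0 a)]
    ring
  have h1 := l1_le_two_sup p q hp0 hq0 hpsum hqsum
  have h2 := l1_le_two_sup q p hq0 hp0 hqsum hpsum
  have h2' : ∑ a, |q a - p a| = ∑ a, |p a - q a| := by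
    apply Finset.sum_congr rfl
    intro a _
    exact abs_sub_comm _ _
  rw [h2'] at h2
  obtain ⟨a₁, -, ha₁⟩ := Finset.exists_mem_eq_sup' Finset.univ_nonempty
    (fun a => Real.log (p a) - Real.log (q a))
  obtain ⟨a₂, -, ha₂⟩ := Finset.exists_mem_eq_sup' Finset.univ_nonempty
    (fun a => Real.log (q a) - Real.log (p a))
  rw [ha₁] at h1
  rw [ha₂] at h2
  set L := ∑ a, |p a - r a| with hL
  have hL0 : 0 ≤ L := Finset.sum_nonneg (fun a _ => abs_nonneg _)
  have hL1 : |p a₁ - r a₁| ≤ L := Finset.single_le_sum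
    (fun a _ => abs_nonneg (p a - r a)) (Finset.mem_univ a₁)
  have hL2 : |p a₂ - r a₂| ≤ L := Finset.single_le_sum
    (fun a _ => abs_nonneg (p a - r a)) (Finset.mem_univ a₂)
  have hG1 : ν * |Real.log (p a₁) - Real.log (r a₁)| ≤ |p a₁ - r a₁| :=
    log_lip_aux hν (hp a₁) (hνr a₁)
  have hG2 : ν * |Real.log (p a₂) - Real.log (r a₂)| ≤ |p a₂ - r a₂| :=
    log_lip_aux hν (hp a₂) (hνr a₂)
  have hS : ∑ a, |p a - q a| ≤ (Real.log (p a₁) - Real.log (q a₁))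
      - (Real.log (p a₂) - Real.log (q a₂)) := by
    linarith [h1, h2]
  have hfin : ν * β * (∑ a, |p a - q a|) ≤ 2 * L := by
    have step1 : ν * β * (∑ a, |p a - q a|)
        ≤ ν * β * ((Real.log (p a₁) - Real.log (q a₁))
          - (Real.log (p a₂) - Real.log (q a₂))) :=
      mul_le_mul_of_nonneg_left hS (by positivity)
    have step2 : ν * β * ((Real.log (p a₁) - Real.log (q a₁))
          - (Real.log (p a₂) - Real.log (q a₂)))
        = ν * ((Real.log (p a₁) - Real.log (r a₁))
          - (Real.log (p a₂) - Real.log (r a₂))) := by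
      rw [hg a₁, hg a₂]
      ring
    have step3 : ν * ((Real.log (p a₁) - Real.log (r a₁))
          - (Real.log (p a₂) - Real.log (r a₂)))
        ≤ ν * |Real.log (p a₁) - Real.log (r a₁)|
          + ν * |Real.log (p a₂) - Real.log (r a₂)| := by
      have e1 := le_abs_self (Real.log (p a₁) - Real.log (r a₁))
      have e2 := neg_abs_le (Real.log (p a₂) - Real.log (r a₂))
      nlinarith [hν]
    linarith [step1, step2.le, step2.ge, step3, hG1, hG2, hL1, hL2]
  rw [div_mul_eq_mul_div, le_div_iff₀ (by positivity : (0:ℝ) < ν * β)]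
  nlinarith [hfin, hL0]
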